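/- Let G be a finite group acting line-transitively on a finite regular linear space, let H be a subgroup of the point stabilizer G_α, and suppose the normalizer N_G(H) is not contained in G_α. Then H stabilizes some line of the space. -/

import Mathlib

/-- A finite regular linear space: a finite point set `P`, a set of lines
(each a finset of points), such that every line has exactly `k` points,
every point lies on exactly `r` lines, and any two distinct points lie on
exactly one common line. -/
structure RegularLinearSpace (P : Type*) [Fintype P] [DecidableEq P] where
  lines : Finset (Finset P)
  k : ℕ
  r : ℕ
  two_le_k : 2 ≤ k
  line_card : ∀ L ∈ lines, L.card = k
  point_deg : ∀ p : P, (lines.filter (fun L => p ∈ L)).card = r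
  exists_unique_line : ∀ p q : P, p ≠ q → ∃! L, L ∈ lines ∧ p ∈ L ∧ q ∈ L

/-- If `G` acts line-transitively on a finite regular linear space, `H` is a
subgroup of the stabilizer of a point `α`, and `N_G(H)` is not contained in
the stabilizer of `α`, then `H` stabilizes some line setwise. -/
theorem stmt_15 {P G : Type*} [Fintype P] [DecidableEq P]
    [Group G] [Fintype G] [MulAction G P]
    (S : RegularLinearSpace P)
    (hpres : ∀ (g : G), ∀ L ∈ S.lines, Finset.image (g • ·) L ∈ S.lines)
    (htrans : ∀ L ∈ S.lines, ∀ L' ∈ S.lines,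
      ∃ g : G, Finset.image (g • ·) L = L')
    (α : P) (H : Subgroup G)
    (hH : H ≤ MulAction.stabilizer G α)
    (hN : ¬ Subgroup.normalizer (H : Set G) ≤ MulAction.stabilizer G α) :
    ∃ L ∈ S.lines, ∀ h ∈ H, Finset.image (h • ·) L = L := by
  -- pick g in the normalizer outside the stabilizer
  obtain ⟨g, hgN, hgα⟩ := SetLike.not_le_iff_exists.mp hN
  have hβ : g • α ≠ α := hgα
  obtain ⟨L, ⟨hL, hαL, hβL⟩, huniq⟩ := S.exists_unique_line α (g • α) (Ne.symm hβ)
  refine ⟨L, hL, fun h hh => ?_⟩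
  have hhα : h • α = α := hH hh
  have hhβ : h • (g • α) = g • α := by
    have : g⁻¹ * h * g ∈ H := by
      have := (Subgroup.mem_normalizer_iff.mp hgN (g⁻¹ * h * g)).mpr
      simpa [mul_assoc] using this (by simpa [mul_assoc] using hh)
    have h2 : (g⁻¹ * h * g) • α = α := hH this
    calc h • g • α = g • (g⁻¹ * h * g) • α := by
          rw [smul_smul, smul_smul]; congr 1; group
      _ = g • α := by rw [h2]
  have hmem : Finset.image (h • ·) L ∈ S.lines := hpres h L hL
  have hα' : α ∈ Finset.image (h • ·) L := Finset.mem_image.mpr ⟨α, hαL, hhα⟩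
  have hβ' : g • α ∈ Finset.image (h • ·) L := Finset.mem_image.mpr ⟨g • α, hβL, hhβ⟩
  exact huniq _ ⟨hmem, hα', hβ'⟩
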